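/- Let 0 < ζ < 1 and G_l(z,y) = (1/2)·e^{-|z-y|} - (1/2)·e^{z+y-2ζ}. For every continuous f : [0,ζ] → ℝ that is not identically zero, ∫₀^ζ ∫₀^ζ f(z) G_l(z,y) f(y) dy dz > 0. -/

import Mathlib

open MeasureTheory intervalIntegral Set Filter

namespace LCK

noncomputable def g (f : ℝ → ℝ) : ℝ → ℝ := fun z => f z * Real.exp z
noncomputable def E (ζ : ℝ) : ℝ → ℝ := fun m => (Real.exp (-(2*m)) - Real.exp (-(2*ζ)))/2
noncomputable def H (f : ℝ → ℝ) : ℝ → ℝ := fun t => ∫ z in (0:ℝ)..t, g f z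
noncomputable def J (ζ : ℝ) (f : ℝ → ℝ) : ℝ → ℝ := fun t => ∫ y in t..ζ, g f y * E ζ y

variable {ζ : ℝ} {f : ℝ → ℝ}

lemma intInt {φ : ℝ → ℝ} (hφ : ContinuousOn φ (Icc 0 ζ)) {a b : ℝ}
    (ha : a ∈ Icc (0:ℝ) ζ) (hb : b ∈ Icc (0:ℝ) ζ) :
    IntervalIntegrable φ volume a b :=
  (hφ.mono (uIcc_subset_Icc ha hb)).intervalIntegrable

lemma hg (hf : ContinuousOn f (Icc 0 ζ)) : ContinuousOn (g f) (Icc 0 ζ) :=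
  hf.mul (Real.continuous_exp.continuousOn)

lemma hE : Continuous (E ζ) := by
  unfold E; fun_prop

lemma hgE (hf : ContinuousOn f (Icc 0 ζ)) :
    ContinuousOn (fun y => g f y * E ζ y) (Icc 0 ζ) :=
  (hg hf).mul hE.continuousOn

lemma hHcont (hζ : 0 ≤ ζ) (hf : ContinuousOn f (Icc 0 ζ)) :
    ContinuousOn (H f) (Icc 0 ζ) := by
  have := intervalIntegral.continuousOn_primitive_interval
    (f := g f) (μ := volume) (a := (0:ℝ)) (b := ζ) ?_
  · rw [uIcc_of_le hζ] at this; exact this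
  · rw [uIcc_of_le hζ]; exact ((hg hf).integrableOn_Icc)

lemma hJcont (hζ : 0 ≤ ζ) (hf : ContinuousOn f (Icc 0 ζ)) :
    ContinuousOn (J ζ f) (Icc 0 ζ) := by
  have := intervalIntegral.continuousOn_primitive_interval_left
    (f := fun y => g f y * E ζ y) (μ := volume) (a := (0:ℝ)) (b := ζ) ?_
  · rw [uIcc_of_le hζ] at this; exact this
  · rw [uIcc_of_le hζ]; exact ((hgE hf).integrableOn_Icc)

lemma hHderiv (hf : ContinuousOn f (Icc 0 ζ)) {x : ℝ} (hx : x ∈ Ioo 0 ζ) :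
    HasDerivAt (H f) (g f x) x := by
  have hxI : Icc (0:ℝ) ζ ∈ nhds x := Icc_mem_nhds hx.1 hx.2
  exact intervalIntegral.integral_hasDerivAt_right
    (intInt (hg hf) ⟨le_refl 0, le_of_lt (lt_of_le_of_lt (le_refl 0) (lt_of_lt_of_le hx.1 (le_of_lt hx.2)))⟩ ⟨le_of_lt hx.1, le_of_lt hx.2⟩)
    (AEStronglyMeasurable.stronglyMeasurableAtFilter_of_mem
      ((hg hf).aestronglyMeasurable measurableSet_Icc) hxI)
    ((hg hf).continuousAt hxI)

lemma hJderiv (hf : ContinuousOn f (Icc 0 ζ)) {x : ℝ} (hx : x ∈ Ioo 0 ζ) :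
    HasDerivAt (J ζ f) (-(g f x * E ζ x)) x := by
  have hxI : Icc (0:ℝ) ζ ∈ nhds x := Icc_mem_nhds hx.1 hx.2
  exact intervalIntegral.integral_hasDerivAt_left
    (intInt (hgE hf) ⟨le_of_lt hx.1, le_of_lt hx.2⟩ (right_mem_Icc.mpr (le_of_lt (lt_trans hx.1 hx.2))))
    (AEStronglyMeasurable.stronglyMeasurableAtFilter_of_mem
      ((hgE hf).aestronglyMeasurable measurableSet_Icc) hxI)
    ((hgE hf).continuousAt hxI)

end LCK

namespace LCK

variable {ζ : ℝ} {f : ℝ → ℝ}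

lemma kernel_eq (ζ z y : ℝ) (f : ℝ → ℝ) :
    f z * ((1/2) * Real.exp (-|z - y|) - (1/2) * Real.exp (z + y - 2*ζ)) * f y
      = g f z * g f y * E ζ (max z y) := by
  have h1 : Real.exp z * Real.exp y * Real.exp (-(2 * max z y)) = Real.exp (-|z - y|) := by
    rw [← Real.exp_add, ← Real.exp_add]
    congr 1
    rcases le_total z y with h | h
    · rw [max_eq_right h, abs_of_nonpos (by linarith)]; ring
    · rw [max_eq_left h, abs_of_nonneg (by linarith)]; ring
  have h2 : Real.exp z * Real.exp y * Real.exp (-(2 * ζ)) = Real.exp (z + y - 2*ζ) := by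
    rw [← Real.exp_add, ← Real.exp_add]; ring_nf
  simp only [g, E]
  rw [← h1, ← h2]; ring

lemma inner_eq (hf : ContinuousOn f (Icc 0 ζ)) {z : ℝ} (hz : z ∈ Icc (0:ℝ) ζ) :
    (∫ y in (0:ℝ)..ζ, g f z * g f y * E ζ (max z y))
      = g f z * E ζ z * H f z + g f z * J ζ f z := by
  have hK : ContinuousOn (fun y => g f z * g f y * E ζ (max z y)) (Icc 0 ζ) :=
    (continuousOn_const.mul (hg hf)).mul
      ((hE.comp (continuous_const.max continuous_id)).continuousOn)
  have h0 : (0:ℝ) ∈ Icc (0:ℝ) ζ := left_mem_Icc.mpr (hz.1.trans hz.2)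
  have hζζ : ζ ∈ Icc (0:ℝ) ζ := right_mem_Icc.mpr (hz.1.trans hz.2)
  have hsplit := integral_add_adjacent_intervals (intInt hK h0 hz) (intInt hK hz hζζ)
  rw [← hsplit]
  have e1 : (∫ y in (0:ℝ)..z, g f z * g f y * E ζ (max z y)) = g f z * E ζ z * H f z := by
    rw [show (g f z * E ζ z * H f z) = (g f z * E ζ z) * ∫ y in (0:ℝ)..z, g f y from by rw [H]]
    rw [← intervalIntegral.integral_const_mul]
    refine integral_congr fun y hy => ?_
    rw [uIcc_of_le hz.1] at hy
    rw [max_eq_left hy.2]; ring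
  have e2 : (∫ y in z..ζ, g f z * g f y * E ζ (max z y)) = g f z * J ζ f z := by
    rw [show g f z * J ζ f z = g f z * ∫ y in z..ζ, g f y * E ζ y from rfl, ← intervalIntegral.integral_const_mul]
    refine integral_congr fun y hy => ?_
    rw [uIcc_of_le hz.2] at hy
    rw [max_eq_right hy.1]; ring
  rw [e1, e2]

lemma ibp1 (hζ : 0 ≤ ζ) (hf : ContinuousOn f (Icc 0 ζ)) :
    ∫ z in (0:ℝ)..ζ, g f z * J ζ f z = ∫ z in (0:ℝ)..ζ, g f z * E ζ z * H f z := by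
  have hFc : ContinuousOn (fun t => H f t * J ζ f t) (Icc 0 ζ) :=
    (hHcont hζ hf).mul (hJcont hζ hf)
  have hder : ∀ x ∈ Ioo (0:ℝ) ζ, HasDerivWithinAt (fun t => H f t * J ζ f t)
      (g f x * J ζ f x - g f x * E ζ x * H f x) (Ioi x) x := by
    intro x hx
    have h1 := (hHderiv hf hx).mul (hJderiv hf hx)
    have h2 : g f x * J ζ f x + H f x * -(g f x * E ζ x)
        = g f x * J ζ f x - g f x * E ζ x * H f x := by ring
    rw [h2] at h1
    exact h1.hasDerivWithinAt
  have h0m : (0:ℝ) ∈ Icc (0:ℝ) ζ := left_mem_Icc.mpr hζ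
  have hζm : ζ ∈ Icc (0:ℝ) ζ := right_mem_Icc.mpr hζ
  have hi1 : IntervalIntegrable (fun x => g f x * J ζ f x) volume 0 ζ :=
    intInt ((hg hf).mul (hJcont hζ hf)) h0m hζm
  have hi2 : IntervalIntegrable (fun x => g f x * E ζ x * H f x) volume 0 ζ :=
    intInt (((hg hf).mul hE.continuousOn).mul (hHcont hζ hf)) h0m hζm
  have key := integral_eq_sub_of_hasDeriv_right_of_le hζ hFc hder (hi1.sub hi2)
  have hJζ : J ζ f ζ = 0 := integral_same
  have hH0 : H f 0 = 0 := integral_same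
  rw [hJζ, hH0] at key
  rw [integral_sub hi1 hi2] at key
  simp at key
  linarith

lemma ibp2 (hζ : 0 ≤ ζ) (hf : ContinuousOn f (Icc 0 ζ)) :
    2 * (∫ t in (0:ℝ)..ζ, g f t * E ζ t * H f t)
      = ∫ t in (0:ℝ)..ζ, Real.exp (-(2*t)) * (H f t)^2 := by
  have hEder : ∀ x : ℝ, HasDerivAt (E ζ) (-Real.exp (-(2*x))) x := by
    intro x
    have hlin : HasDerivAt (fun m : ℝ => -(2*m)) (-2) x := by
      simpa using ((hasDerivAt_id x).const_mul (-2 : ℝ))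
    have hexp := (Real.hasDerivAt_exp (-(2*x))).comp x hlin
    have : HasDerivAt (fun m => (Real.exp (-(2*m)) - Real.exp (-(2*ζ)))/2)
        ((Real.exp (-(2*x)) * -2)/2) x := (hexp.sub_const _).div_const 2
    convert this using 1
    · rfl
    ring
  have hFc : ContinuousOn (fun t => E ζ t * (H f t)^2) (Icc 0 ζ) :=
    hE.continuousOn.mul ((hHcont hζ hf).pow 2)
  have hder : ∀ x ∈ Ioo (0:ℝ) ζ, HasDerivWithinAt (fun t => E ζ t * (H f t)^2)
      (2 * (g f x * E ζ x * H f x) - Real.exp (-(2*x)) * (H f x)^2) (Ioi x) x := by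
    intro x hx
    have h1 := (hEder x).mul ((hHderiv hf hx).pow 2)
    refine (h1.congr_deriv ?_).hasDerivWithinAt
    push_cast
    simp only [Pi.pow_apply]
    ring
  have h0m : (0:ℝ) ∈ Icc (0:ℝ) ζ := left_mem_Icc.mpr hζ
  have hζm : ζ ∈ Icc (0:ℝ) ζ := right_mem_Icc.mpr hζ
  have hi1 : IntervalIntegrable (fun x => 2 * (g f x * E ζ x * H f x)) volume 0 ζ :=
    intInt (continuousOn_const.mul (((hg hf).mul hE.continuousOn).mul (hHcont hζ hf))) h0m hζm
  have hi2 : IntervalIntegrable (fun x => Real.exp (-(2*x)) * (H f x)^2) volume 0 ζ :=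
    intInt ((Real.continuous_exp.comp (by fun_prop)).continuousOn.mul ((hHcont hζ hf).pow 2)) h0m hζm
  have key := integral_eq_sub_of_hasDeriv_right_of_le hζ hFc hder (hi1.sub hi2)
  have hEζ : E ζ ζ = 0 := by simp [E]
  have hH0 : H f 0 = 0 := integral_same
  rw [hEζ, hH0] at key
  rw [integral_sub hi1 hi2] at key
  rw [intervalIntegral.integral_const_mul] at key
  simp at key
  linarith

end LCK

namespace LCK

variable {ζ : ℝ} {f : ℝ → ℝ}

lemma interior_of_ne {φ : ℝ → ℝ} (hζ0 : 0 < ζ) (hφ : ContinuousOn φ (Icc 0 ζ))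
    {t₁ : ℝ} (ht₁ : t₁ ∈ Icc (0:ℝ) ζ) (hne : φ t₁ ≠ 0) :
    ∃ t ∈ Ioo (0:ℝ) ζ, φ t ≠ 0 := by
  have hcw : ContinuousWithinAt φ (Icc 0 ζ) t₁ := hφ t₁ ht₁
  have hev : ∀ᶠ x in nhdsWithin t₁ (Icc 0 ζ), φ x ≠ 0 :=
    hcw.eventually (eventually_ne_nhds hne)
  have hev' : ∀ᶠ x in nhdsWithin t₁ (Ioo 0 ζ), φ x ≠ 0 :=
    hev.filter_mono (nhdsWithin_mono _ Ioo_subset_Icc_self)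
  have hnb : (nhdsWithin t₁ (Ioo 0 ζ)).NeBot := by
    rw [← mem_closure_iff_nhdsWithin_neBot, closure_Ioo hζ0.ne]
    exact ht₁
  obtain ⟨t, ht, hmem⟩ := (hev'.and self_mem_nhdsWithin).exists
  exact ⟨t, hmem, ht⟩

lemma exists_interior (hζ0 : 0 < ζ) (hf : ContinuousOn f (Icc 0 ζ))
    (hne : ∃ z ∈ Icc (0:ℝ) ζ, f z ≠ 0) :
    ∃ t ∈ Ioo (0:ℝ) ζ, H f t ≠ 0 := by
  obtain ⟨z₀, hz₀, hfz₀⟩ := hne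
  have hgz₀ : g f z₀ ≠ 0 := mul_ne_zero hfz₀ (Real.exp_ne_zero _)
  obtain ⟨z₁, hz₁, hgz₁⟩ := interior_of_ne hζ0 (hg hf) hz₀ hgz₀
  have hcat : ContinuousAt (g f) z₁ := (hg hf).continuousAt (Icc_mem_nhds hz₁.1 hz₁.2)
  have hψ : ContinuousAt (fun x => g f z₁ * g f x) z₁ := continuousAt_const.mul hcat
  have hψpos : (0:ℝ) < g f z₁ * g f z₁ := by
    have := sq_nonneg (g f z₁)
    rcases this.lt_or_eq with h | h
    · simpa [sq] using h
    · exact absurd (pow_eq_zero_iff (n := 2) (by norm_num) |>.mp h.symm) hgz₁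
  have hev : ∀ᶠ x in nhds z₁, 0 < g f z₁ * g f x ∧ x ∈ Ioo 0 ζ :=
    (hψ.eventually (eventually_gt_nhds hψpos)).and (isOpen_Ioo.eventually_mem hz₁)
  obtain ⟨u, v, hz₁uv, hsub⟩ := mem_nhds_iff_exists_Ioo_subset.mp hev
  have huv : u < v := hz₁uv.1.trans hz₁uv.2
  have hsubIoo : Ioo u v ⊆ Ioo 0 ζ := fun x hx => (hsub hx).2
  obtain ⟨hu0, hvζ⟩ := (Ioo_subset_Ioo_iff huv).mp hsubIoo
  have humem : u ∈ Icc (0:ℝ) ζ := ⟨hu0, huv.le.trans hvζ⟩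
  have hvmem : v ∈ Icc (0:ℝ) ζ := ⟨hu0.trans huv.le, hvζ⟩
  have hintuv : IntervalIntegrable (fun x => g f z₁ * g f x) volume u v :=
    intInt (continuousOn_const.mul (hg hf)) humem hvmem
  have hposint : 0 < ∫ x in u..v, g f z₁ * g f x :=
    intervalIntegral_pos_of_pos_on hintuv (fun x hx => (hsub hx).1) huv
  rw [intervalIntegral.integral_const_mul] at hposint
  have hIne : (∫ x in u..v, g f x) ≠ 0 := by
    intro h; rw [h, mul_zero] at hposint; exact lt_irrefl 0 hposint
  have hadd : H f u + ∫ x in u..v, g f x = H f v :=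
    integral_add_adjacent_intervals (intInt (hg hf) (left_mem_Icc.mpr hζ0.le) humem)
      (intInt (hg hf) humem hvmem)
  by_cases hHu : H f u = 0
  · have : H f v ≠ 0 := by rw [← hadd, hHu, zero_add]; exact hIne
    exact interior_of_ne hζ0 (hHcont hζ0.le hf) hvmem this
  · exact interior_of_ne hζ0 (hHcont hζ0.le hf) humem hHu

lemma final_pos (hζ0 : 0 < ζ) (hf : ContinuousOn f (Icc 0 ζ))
    (hne : ∃ z ∈ Icc (0:ℝ) ζ, f z ≠ 0) :
    0 < ∫ t in (0:ℝ)..ζ, Real.exp (-(2*t)) * (H f t)^2 := by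
  obtain ⟨t₀, ht₀, hHt₀⟩ := exists_interior hζ0 hf hne
  set φ : ℝ → ℝ := fun t => Real.exp (-(2*t)) * (H f t)^2 with hφdef
  have hφc : ContinuousOn φ (Icc 0 ζ) :=
    (Real.continuous_exp.comp (by fun_prop)).continuousOn.mul ((hHcont hζ0.le hf).pow 2)
  have hφnn : ∀ t, 0 ≤ φ t := fun t => mul_nonneg (Real.exp_pos _).le (sq_nonneg _)
  have hcat : ContinuousAt φ t₀ := hφc.continuousAt (Icc_mem_nhds ht₀.1 ht₀.2)
  have hφt₀ : 0 < φ t₀ := mul_pos (Real.exp_pos _) (pow_two_pos_of_ne_zero hHt₀)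
  have hev : ∀ᶠ x in nhds t₀, 0 < φ x ∧ x ∈ Ioo 0 ζ :=
    (hcat.eventually (eventually_gt_nhds hφt₀)).and (isOpen_Ioo.eventually_mem ht₀)
  obtain ⟨u, v, ht₀uv, hsub⟩ := mem_nhds_iff_exists_Ioo_subset.mp hev
  have huv : u < v := ht₀uv.1.trans ht₀uv.2
  obtain ⟨hu0, hvζ⟩ := (Ioo_subset_Ioo_iff huv).mp (fun x hx => (hsub hx).2)
  have humem : u ∈ Icc (0:ℝ) ζ := ⟨hu0, huv.le.trans hvζ⟩
  have hvmem : v ∈ Icc (0:ℝ) ζ := ⟨hu0.trans huv.le, hvζ⟩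
  have h0m : (0:ℝ) ∈ Icc (0:ℝ) ζ := left_mem_Icc.mpr hζ0.le
  have hζm : ζ ∈ Icc (0:ℝ) ζ := right_mem_Icc.mpr hζ0.le
  have i1 := intInt hφc h0m humem
  have i2 := intInt hφc humem hvmem
  have i3 := intInt hφc hvmem hζm
  have e1 : (∫ t in (0:ℝ)..u, φ t) + ∫ t in u..ζ, φ t = ∫ t in (0:ℝ)..ζ, φ t :=
    integral_add_adjacent_intervals i1 (intInt hφc humem hζm)
  have e2 : (∫ t in u..v, φ t) + ∫ t in v..ζ, φ t = ∫ t in u..ζ, φ t :=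
    integral_add_adjacent_intervals i2 i3
  have n1 : 0 ≤ ∫ t in (0:ℝ)..u, φ t := integral_nonneg hu0 (fun x _ => hφnn x)
  have n3 : 0 ≤ ∫ t in v..ζ, φ t := integral_nonneg hvζ (fun x _ => hφnn x)
  have nmid : 0 < ∫ t in u..v, φ t :=
    intervalIntegral_pos_of_pos_on i2 (fun x hx => (hsub hx).1) huv
  linarith

end LCK

open LCK in
/-- The left-child kernel `G_l(z,y) = (1/2)e^{-|z-y|} - (1/2)e^{z+y-2ζ}` is positive
definite on `[0,ζ]`: for every continuous `f : [0,ζ] → ℝ` not identically zero,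
`∫₀^ζ∫₀^ζ f(z) G_l(z,y) f(y) dy dz > 0`. -/
theorem left_child_kernel_positive_definite
    (ζ : ℝ) (hζ0 : 0 < ζ) (hζ1 : ζ < 1)
    (f : ℝ → ℝ) (hf : ContinuousOn f (Set.Icc 0 ζ))
    (hne : ∃ z ∈ Set.Icc (0:ℝ) ζ, f z ≠ 0) :
    0 < ∫ z in (0:ℝ)..ζ, ∫ y in (0:ℝ)..ζ,
          f z * ((1/2) * Real.exp (-|z - y|) - (1/2) * Real.exp (z + y - 2*ζ)) * f y := by
  have h0m : (0:ℝ) ∈ Icc (0:ℝ) ζ := left_mem_Icc.mpr hζ0.le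
  have hζm : ζ ∈ Icc (0:ℝ) ζ := right_mem_Icc.mpr hζ0.le
  have houter : (∫ z in (0:ℝ)..ζ, ∫ y in (0:ℝ)..ζ,
        f z * ((1/2) * Real.exp (-|z - y|) - (1/2) * Real.exp (z + y - 2*ζ)) * f y)
      = ∫ z in (0:ℝ)..ζ, (g f z * E ζ z * H f z + g f z * J ζ f z) := by
    refine integral_congr fun z hz => ?_
    rw [uIcc_of_le hζ0.le] at hz
    have : (∫ y in (0:ℝ)..ζ,
          f z * ((1/2) * Real.exp (-|z - y|) - (1/2) * Real.exp (z + y - 2*ζ)) * f y)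
        = ∫ y in (0:ℝ)..ζ, g f z * g f y * E ζ (max z y) := by
      simp only [kernel_eq]
    rw [this, inner_eq hf hz]
  have hi1 : IntervalIntegrable (fun z => g f z * E ζ z * H f z) volume 0 ζ :=
    intInt (((hg hf).mul hE.continuousOn).mul (hHcont hζ0.le hf)) h0m hζm
  have hi2 : IntervalIntegrable (fun z => g f z * J ζ f z) volume 0 ζ :=
    intInt ((hg hf).mul (hJcont hζ0.le hf)) h0m hζm
  rw [houter, integral_add hi1 hi2, ibp1 hζ0.le hf]
  have h2 : (∫ z in (0:ℝ)..ζ, g f z * E ζ z * H f z)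
      + (∫ z in (0:ℝ)..ζ, g f z * E ζ z * H f z)
      = ∫ t in (0:ℝ)..ζ, Real.exp (-(2*t)) * (H f t)^2 := by
    rw [← two_mul]; exact ibp2 hζ0.le hf
  rw [h2]
  exact final_pos hζ0 hf hne
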